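/- Let n ≥ 2 and consider C[z_{ij}]. For any subset B₀ ⊆ {2,...,n} with n ∈ B₀ and |B₀| = i₀, the minor p_{B₀} (the determinant of (z_{kℓ})_{k∈B₀, 1≤ℓ≤i₀}) satisfies p_{B₀}² ∈ J_{i₀}^0 · K_{i₀}, where J_{i₀}^0 = ⟨z_{n1},...,z_{n i₀}⟩ and K_{i₀} = ⟨p_B : B ⊆ {2,...,n}, |B| = i₀⟩. -/

import Mathlib

open MvPolynomial

/-- The variable `z_{ij}` in `ℂ[z_{ij} : 1 ≤ i, j ≤ n]` (`0`-based indexing). -/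
noncomputable def z0 (n : ℕ) (i j : Fin n) : MvPolynomial (Fin n × Fin n) ℂ := X (i, j)

/-- The last row index (row `n` in `1`-based indexing). -/
def rowN (n : ℕ) [NeZero n] : Fin n :=
  ⟨n - 1, Nat.sub_lt (Nat.pos_of_ne_zero (NeZero.ne n)) one_pos⟩

/-- The ideal `J_i^0 = ⟨z_{n1}, …, z_{ni}⟩`. -/
noncomputable def J0 (n : ℕ) [NeZero n] (i : ℕ) : Ideal (MvPolynomial (Fin n × Fin n) ℂ) :=
  Ideal.span {f | ∃ k : Fin n, (k : ℕ) < i ∧ f = z0 n (rowN n) k}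

/-- The ideal `K_j`, generated by the `j × j` minors `p_B` of `(z_{kℓ})` with row set
`B ⊆ {2, …, n}`, `|B| = j`, and columns `1, …, j` (for `j ≤ n` the column index
`b % n` is just `b`; `K_n = 0` since no admissible `B` exists). -/
noncomputable def K0 (n : ℕ) [NeZero n] (j : ℕ) : Ideal (MvPolynomial (Fin n × Fin n) ℂ) :=
  Ideal.span {f | ∃ B : Fin j → Fin n, StrictMono B ∧ (∀ a, 1 ≤ (B a : ℕ)) ∧
    f = Matrix.det (Matrix.of fun a b : Fin j =>
      z0 n (B a) ⟨(b : ℕ) % n, Nat.mod_lt _ (Nat.pos_of_ne_zero (NeZero.ne n))⟩)}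

/-- For any `B₀ ⊆ {2, …, n}` with `n ∈ B₀` and `|B₀| = i₀`, the square of the
minor `p_{B₀}` lies in the product ideal `J_{i₀}^0 · K_{i₀}`. -/
theorem pB0_sq_mem (n : ℕ) [NeZero n] (hn : 2 ≤ n) (i₀ : ℕ) (h1 : 1 ≤ i₀) (hin : i₀ ≤ n)
    (B₀ : Fin i₀ → Fin n) (hB : StrictMono B₀) (hB1 : ∀ a, 1 ≤ (B₀ a : ℕ))
    (hBn : ∃ a, (B₀ a : ℕ) = n - 1) :
    (Matrix.det (Matrix.of fun a b : Fin i₀ => z0 n (B₀ a) (Fin.castLE hin b))) ^ 2 ∈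
      J0 n i₀ * K0 n i₀ := by
  set M : Matrix (Fin i₀) (Fin i₀) (MvPolynomial (Fin n × Fin n) ℂ) :=
    Matrix.of fun a b => z0 n (B₀ a) (Fin.castLE hin b) with hM
  obtain ⟨a₀, ha₀⟩ := hBn
  have hrow : B₀ a₀ = rowN n := by
    apply Fin.ext; simpa [rowN] using ha₀
  have hJ : M.det ∈ J0 n i₀ := by
    rw [Matrix.det_apply]
    refine Submodule.sum_mem _ fun σ _ => ?_
    rw [Units.smul_def]
    refine zsmul_mem ?_ _
    have key : (Finset.univ : Finset (Fin i₀)).prod (fun i => M (σ i) i)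
        = M (σ (σ⁻¹ a₀)) (σ⁻¹ a₀) * ∏ i ∈ Finset.univ.erase (σ⁻¹ a₀), M (σ i) i :=
      (Finset.mul_prod_erase _ _ (Finset.mem_univ (σ⁻¹ a₀))).symm
    rw [key, show σ (σ⁻¹ a₀) = a₀ from σ.apply_symm_apply a₀]
    refine Ideal.mul_mem_right _ _ (Ideal.subset_span ?_)
    exact ⟨Fin.castLE hin (σ⁻¹ a₀), (σ⁻¹ a₀).isLt, by rw [hM]; simp [hrow]⟩
  have hK : M.det ∈ K0 n i₀ := by
    refine Ideal.subset_span ⟨B₀, hB, hB1, ?_⟩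
    congr 1
    ext a b
    rw [hM]
    simp only [Matrix.of_apply, z0]
    have hcol : Fin.castLE hin b =
        (⟨(b : ℕ) % n, Nat.mod_lt _ (Nat.pos_of_ne_zero (NeZero.ne n))⟩ : Fin n) :=
      Fin.ext (by simp [Nat.mod_eq_of_lt (lt_of_lt_of_le b.isLt hin)])
    rw [hcol]
  simpa [sq] using Ideal.mul_mem_mul hJ hK
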